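/- Let δ > 0 and m, M ≥ 0 be real numbers. Then there exists a constant C > 0 such that for every ε ∈ (0,1] and every measurable function g : ℝ → ℂ with ∫_ℝ (1+k²)^{m+M}|g(k)|² dk < ∞, one has ∫_{|k| ≥ δ} (1+k²)^m · ε^{−2}·|g(k/ε)|² dk ≤ C²·ε^{2(m+M)−1}·∫_ℝ (1+k²)^{m+M}|g(k)|² dk. Equivalently, ‖(χ_{[−δ,δ]} − 1)·ε^{−1} g(ε^{−1}·)‖_{L²(m)} ≤ C·ε^{m+M−1/2}·‖(1+k²)^{(m+M)/2} g‖_{L²}. -/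

import Mathlib

open MeasureTheory

lemma cutoff_core (δ m M ε u : ℝ) (hδ : 0 < δ) (hm : 0 ≤ m) (hM : 0 ≤ M)
    (hε : 0 < ε) (h : δ ≤ |ε * u|) :
    (1 + (ε * u) ^ 2) ^ m * ε⁻¹ ^ 2 ≤
      ((1 + δ⁻¹ ^ 2) ^ m * (δ⁻¹ ^ 2) ^ M) * ε ^ (2 * (m + M) - 2) * (1 + u ^ 2) ^ (m + M) := by
  have h2 : δ ^ 2 ≤ ε ^ 2 * u ^ 2 := by
    have := mul_self_le_mul_self hδ.le h
    nlinarith [sq_abs (ε * u)]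
  have hd : δ⁻¹ ^ 2 * δ ^ 2 = 1 := by field_simp
  have hmul := mul_le_mul_of_nonneg_left h2 (by positivity : (0:ℝ) ≤ δ⁻¹ ^ 2)
  have key1 : (1 + (ε * u) ^ 2) ≤ (1 + δ⁻¹ ^ 2) * (ε ^ 2 * (1 + u ^ 2)) := by
    nlinarith [sq_nonneg (ε * u), sq_nonneg ε]
  have key2 : (1:ℝ) ≤ δ⁻¹ ^ 2 * (ε ^ 2 * u ^ 2) := by nlinarith
  have hb1 : (0:ℝ) ≤ 1 + (ε * u) ^ 2 := by positivity
  have step1 : (1 + (ε * u) ^ 2) ^ m ≤ ((1 + δ⁻¹ ^ 2) * (ε ^ 2 * (1 + u ^ 2))) ^ m :=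
    Real.rpow_le_rpow hb1 key1 hm
  have step2 : (1:ℝ) ≤ (δ⁻¹ ^ 2 * (ε ^ 2 * u ^ 2)) ^ M :=
    Real.one_le_rpow key2 hM
  -- expand products
  have e1 : ((1 + δ⁻¹ ^ 2) * (ε ^ 2 * (1 + u ^ 2))) ^ m
      = (1 + δ⁻¹ ^ 2) ^ m * ((ε ^ 2) ^ m * (1 + u ^ 2) ^ m) := by
    rw [Real.mul_rpow (by positivity) (by positivity), Real.mul_rpow (by positivity) (by positivity)]
  have e2 : (δ⁻¹ ^ 2 * (ε ^ 2 * u ^ 2)) ^ M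
      = (δ⁻¹ ^ 2) ^ M * ((ε ^ 2) ^ M * (u ^ 2) ^ M) := by
    rw [Real.mul_rpow (by positivity) (by positivity), Real.mul_rpow (by positivity) (by positivity)]
  have e3 : (u ^ 2) ^ M ≤ (1 + u ^ 2) ^ M :=
    Real.rpow_le_rpow (by positivity) (by linarith) hM
  have e4 : (ε ^ 2) ^ m * (ε ^ 2) ^ M * ε⁻¹ ^ 2 = ε ^ (2 * (m + M) - 2) := by
    have h2' : (ε:ℝ) ^ 2 = ε ^ (2:ℝ) := by
      rw [← Real.rpow_natCast ε 2]; norm_num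
    rw [h2', ← Real.rpow_mul hε.le, ← Real.rpow_mul hε.le, ← Real.rpow_add hε,
      show ε⁻¹ ^ 2 = ε ^ (-2:ℝ) by
        rw [Real.rpow_neg hε.le, ← h2', inv_pow],
      ← Real.rpow_add hε]
    ring_nf
  have e5 : (1 + u ^ 2) ^ m * (1 + u ^ 2) ^ M = (1 + u ^ 2) ^ (m + M) := by
    rw [← Real.rpow_add (by positivity)]
  calc (1 + (ε * u) ^ 2) ^ m * ε⁻¹ ^ 2
      ≤ (((1 + δ⁻¹ ^ 2) * (ε ^ 2 * (1 + u ^ 2))) ^ m * (δ⁻¹ ^ 2 * (ε ^ 2 * u ^ 2)) ^ M) * ε⁻¹ ^ 2 := by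
        have hεi : (0:ℝ) ≤ ε⁻¹ ^ 2 := by positivity
        have : (1 + (ε * u) ^ 2) ^ m ≤
            ((1 + δ⁻¹ ^ 2) * (ε ^ 2 * (1 + u ^ 2))) ^ m * (δ⁻¹ ^ 2 * (ε ^ 2 * u ^ 2)) ^ M := by
          calc (1 + (ε * u) ^ 2) ^ m ≤ ((1 + δ⁻¹ ^ 2) * (ε ^ 2 * (1 + u ^ 2))) ^ m := step1
            _ ≤ _ := le_mul_of_one_le_right (by positivity) step2
        exact mul_le_mul_of_nonneg_right this hεi
    _ = ((1 + δ⁻¹ ^ 2) ^ m * (δ⁻¹ ^ 2) ^ M) * ((ε ^ 2) ^ m * (ε ^ 2) ^ M * ε⁻¹ ^ 2)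
          * ((1 + u ^ 2) ^ m * (u ^ 2) ^ M) := by rw [e1, e2]; ring
    _ ≤ ((1 + δ⁻¹ ^ 2) ^ m * (δ⁻¹ ^ 2) ^ M) * ((ε ^ 2) ^ m * (ε ^ 2) ^ M * ε⁻¹ ^ 2)
          * ((1 + u ^ 2) ^ m * (1 + u ^ 2) ^ M) := by
        apply mul_le_mul_of_nonneg_left _ (by positivity)
        exact mul_le_mul_of_nonneg_left e3 (by positivity)
    _ = _ := by rw [e4, e5]



/-- Cut-off estimate for concentrated wave packets: for `δ > 0` and `m, M ≥ 0` there is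
`C > 0` such that for all `ε ∈ (0,1]` and all measurable `g` with
∫ (1+k²)^{m+M}|g(k)|² dk < ∞ one has
∫_{|k| ≥ δ} (1+k²)^m ε⁻²|g(k/ε)|² dk ≤ C²·ε^{2(m+M)−1}·∫ (1+k²)^{m+M}|g(k)|² dk,
i.e. ‖(χ_{[−δ,δ]} − 1)·ε⁻¹g(ε⁻¹·)‖_{L²(m)} ≤ C·ε^{m+M−1/2}·‖(1+k²)^{(m+M)/2}g‖_{L²}. -/
theorem cutoff_estimate (δ : ℝ) (hδ : 0 < δ) (m M : ℝ) (hm : 0 ≤ m) (hM : 0 ≤ M) :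
    ∃ C > (0 : ℝ), ∀ ε : ℝ, 0 < ε → ε ≤ 1 → ∀ g : ℝ → ℂ, Measurable g →
      (∫⁻ k : ℝ, ENNReal.ofReal ((1 + k ^ 2) ^ (m + M) * ‖g k‖ ^ 2)) < ⊤ →
      (∫⁻ k in {k : ℝ | δ ≤ |k|},
          ENNReal.ofReal ((1 + k ^ 2) ^ m * ε⁻¹ ^ 2 * ‖g (k / ε)‖ ^ 2))
        ≤ ENNReal.ofReal (C ^ 2 * ε ^ (2 * (m + M) - 1)) *
            ∫⁻ k : ℝ, ENNReal.ofReal ((1 + k ^ 2) ^ (m + M) * ‖g k‖ ^ 2) := by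
  have hApos : (0:ℝ) < (1 + δ⁻¹ ^ 2) ^ m * (δ⁻¹ ^ 2) ^ M := by positivity
  refine ⟨Real.sqrt ((1 + δ⁻¹ ^ 2) ^ m * (δ⁻¹ ^ 2) ^ M), Real.sqrt_pos.mpr hApos, ?_⟩
  intro ε hε hε1 g hg _
  have hC2 : Real.sqrt ((1 + δ⁻¹ ^ 2) ^ m * (δ⁻¹ ^ 2) ^ M) ^ 2
      = (1 + δ⁻¹ ^ 2) ^ m * (δ⁻¹ ^ 2) ^ M := Real.sq_sqrt hApos.le
  set A : ℝ := (1 + δ⁻¹ ^ 2) ^ m * (δ⁻¹ ^ 2) ^ M with hAdef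
  set F : ℝ → ENNReal := fun k =>
    ENNReal.ofReal ((1 + k ^ 2) ^ m * ε⁻¹ ^ 2 * ‖g (k / ε)‖ ^ 2) with hF
  have hs : MeasurableSet {k : ℝ | δ ≤ |k|} :=
    (isClosed_le continuous_const continuous_abs).measurableSet
  have hFmeas : Measurable F := by
    have hcont : Continuous fun k : ℝ => (1 + k ^ 2 : ℝ) ^ m :=
      (continuous_const.add (continuous_pow 2)).rpow_const fun x => Or.inr hm
    apply Measurable.ennreal_ofReal
    apply Measurable.mul
    · exact hcont.measurable.mul measurable_const
    · exact (continuous_norm.measurable.comp (hg.comp (measurable_id.div_const ε))).pow_const 2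
  have hind : Measurable ({k : ℝ | δ ≤ |k|}.indicator F) := hFmeas.indicator hs
  rw [← lintegral_indicator hs F]
  have key : (∫⁻ k, ({k : ℝ | δ ≤ |k|}).indicator F k)
      = ENNReal.ofReal ε * ∫⁻ u, ({k : ℝ | δ ≤ |k|}).indicator F (ε * u) := by
    conv_lhs => rw [← Real.smul_map_volume_mul_left (ne_of_gt hε)]
    rw [lintegral_smul_measure, lintegral_map hind (measurable_const_mul ε), abs_of_pos hε, smul_eq_mul]
  rw [key]
  have hpt : ∀ u : ℝ, ({k : ℝ | δ ≤ |k|}).indicator F (ε * u)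
      ≤ ENNReal.ofReal (A * ε ^ (2 * (m + M) - 2)) *
          ENNReal.ofReal ((1 + u ^ 2) ^ (m + M) * ‖g u‖ ^ 2) := by
    intro u
    by_cases hu : ε * u ∈ {k : ℝ | δ ≤ |k|}
    · rw [Set.indicator_of_mem hu, hF]
      simp only
      rw [mul_div_cancel_left₀ u (ne_of_gt hε), ← ENNReal.ofReal_mul (by positivity)]
      apply ENNReal.ofReal_le_ofReal
      have hcore := cutoff_core δ m M ε u hδ hm hM hε hu
      calc (1 + (ε * u) ^ 2) ^ m * ε⁻¹ ^ 2 * ‖g u‖ ^ 2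
          ≤ (A * ε ^ (2 * (m + M) - 2) * (1 + u ^ 2) ^ (m + M)) * ‖g u‖ ^ 2 :=
            mul_le_mul_of_nonneg_right hcore (by positivity)
        _ = _ := by ring
    · rw [Set.indicator_of_notMem hu]; exact zero_le
  calc ENNReal.ofReal ε * ∫⁻ u, ({k : ℝ | δ ≤ |k|}).indicator F (ε * u)
      ≤ ENNReal.ofReal ε * ∫⁻ u, ENNReal.ofReal (A * ε ^ (2 * (m + M) - 2)) *
          ENNReal.ofReal ((1 + u ^ 2) ^ (m + M) * ‖g u‖ ^ 2) :=
        mul_le_mul_right (lintegral_mono hpt) _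
    _ = ENNReal.ofReal ε * (ENNReal.ofReal (A * ε ^ (2 * (m + M) - 2)) *
          ∫⁻ u, ENNReal.ofReal ((1 + u ^ 2) ^ (m + M) * ‖g u‖ ^ 2)) := by
        rw [lintegral_const_mul' _ _ ENNReal.ofReal_ne_top]
    _ = ENNReal.ofReal (A * ε ^ (2 * (m + M) - 1)) *
          ∫⁻ u, ENNReal.ofReal ((1 + u ^ 2) ^ (m + M) * ‖g u‖ ^ 2) := by
        rw [← mul_assoc, ← ENNReal.ofReal_mul hε.le]
        congr 2
        have h1 : ε * ε ^ (2 * (m + M) - 2) = ε ^ (2 * (m + M) - 1) := by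
          nth_rewrite 1 [← Real.rpow_one ε]
          rw [← Real.rpow_add hε]; ring_nf
        rw [← mul_assoc, mul_comm ε A, mul_assoc, h1]
    _ = _ := by rw [hC2]
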